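/- Let A ⊆ ℝⁿ be a measurable set of finite positive Lebesgue measure V, and let X be uniformly distributed on A. Then E[‖X‖_∞] ≥ (1/8)·V^{1/n}. -/

import Mathlib

open MeasureTheory

/-- If `X` is uniform on a measurable set `A ⊆ ℝⁿ` of finite positive Lebesgue measure `V`,
then `E[‖X‖_∞] ≥ (1/8) V^{1/n}` (stated as `∫⁻_A ‖x‖_∞ ≥ (1/8) V^{1/n} · V`). -/
theorem stmt_1 (n : ℕ) (hn : 0 < n) (A : Set (Fin n → ℝ)) (hA : MeasurableSet A)
    (h0 : 0 < volume A) (hfin : volume A < ⊤) :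
    ENNReal.ofReal ((1 / 8) * (volume A).toReal ^ ((1 : ℝ) / n)) * volume A
      ≤ ∫⁻ x in A, (‖x‖₊ : ENNReal) ∂volume := by
  set V : ENNReal := volume A with hV
  set c : ℝ := V.toReal ^ ((1 : ℝ) / n) with hc
  have hc0 : 0 ≤ c := Real.rpow_nonneg ENNReal.toReal_nonneg _
  set r : ℝ := (1 / 4) * c with hr
  have hr0 : 0 ≤ r := by positivity
  -- volume of the ball of radius r
  have hball : volume (Metric.closedBall (0 : Fin n → ℝ) r) ≤ V / 2 := by
    rw [Real.volume_pi_closedBall _ hr0]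
    have hcn : c ^ n = V.toReal := by
      rw [hc, ← Real.rpow_natCast (V.toReal ^ ((1:ℝ)/n)) n, ← Real.rpow_mul ENNReal.toReal_nonneg]
      rw [one_div, inv_mul_cancel₀ (by exact_mod_cast hn.ne' : (n : ℝ) ≠ 0), Real.rpow_one]
    have h2r : (2 * r) ^ Fintype.card (Fin n) = (1/2)^n * V.toReal := by
      rw [Fintype.card_fin, hr]
      rw [show (2 : ℝ) * ((1/4) * c) = (1/2) * c by ring, mul_pow, hcn]
    rw [h2r]
    have hle : (1/2 : ℝ)^n * V.toReal ≤ (1/2) * V.toReal := by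
      apply mul_le_mul_of_nonneg_right _ ENNReal.toReal_nonneg
      calc (1/2 : ℝ)^n ≤ (1/2)^1 := by
            apply pow_le_pow_of_le_one (by norm_num) (by norm_num) hn
        _ = 1/2 := pow_one _
    calc ENNReal.ofReal ((1/2)^n * V.toReal) ≤ ENNReal.ofReal ((1/2) * V.toReal) :=
          ENNReal.ofReal_le_ofReal hle
      _ = ENNReal.ofReal (1/2) * ENNReal.ofReal V.toReal := ENNReal.ofReal_mul (by norm_num)
      _ = ENNReal.ofReal (1/2) * V := by rw [ENNReal.ofReal_toReal hfin.ne]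
      _ = V / 2 := by
          rw [show ENNReal.ofReal (1/2) = (2 : ENNReal)⁻¹ by
            rw [ENNReal.ofReal_div_of_pos (by norm_num), ENNReal.ofReal_one,
              ENNReal.ofReal_ofNat, one_div]]
          rw [ENNReal.div_eq_inv_mul]
  -- the part of A outside the ball has measure ≥ V/2
  set S : Set (Fin n → ℝ) := A \ Metric.closedBall 0 r with hS
  have hSmeas : MeasurableSet S := hA.diff measurableSet_closedBall
  have hSvol : V / 2 ≤ volume S := by
    have h1 : V ≤ volume S + V / 2 := by
      calc V ≤ volume (S ∪ (A ∩ Metric.closedBall 0 r)) := by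
            apply measure_mono; intro x hx
            by_cases h : x ∈ Metric.closedBall (0 : Fin n → ℝ) r
            · exact Or.inr ⟨hx, h⟩
            · exact Or.inl ⟨hx, h⟩
        _ ≤ volume S + volume (A ∩ Metric.closedBall 0 r) := measure_union_le _ _
        _ ≤ volume S + V / 2 := by
            gcongr
            exact le_trans (measure_mono Set.inter_subset_right) hball
    have := tsub_le_iff_right.mpr h1
    calc V / 2 = V - V / 2 := (ENNReal.sub_half hfin.ne).symm
      _ ≤ volume S := this
  -- lower bound the integral
  have hnorm : ∀ x ∈ S, ENNReal.ofReal r ≤ (‖x‖₊ : ENNReal) := by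
    intro x hx
    have : r < ‖x‖ := by
      have := hx.2
      simp only [Metric.mem_closedBall, dist_zero_right, not_le] at this
      exact this
    calc ENNReal.ofReal r ≤ ENNReal.ofReal ‖x‖ := ENNReal.ofReal_le_ofReal this.le
      _ = (‖x‖₊ : ENNReal) := ofReal_norm x
  calc ENNReal.ofReal ((1 / 8) * c) * V
      = ENNReal.ofReal r * (V / 2) := by
        rw [hr, show (1/4 : ℝ) * c = 2 * ((1/8) * c) by ring,
          ENNReal.ofReal_mul (by norm_num : (0:ℝ) ≤ 2), ENNReal.ofReal_ofNat]
        rw [mul_comm (2 : ENNReal), mul_assoc, ENNReal.div_eq_inv_mul, ← mul_assoc 2,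
          ENNReal.mul_inv_cancel (by norm_num) (by norm_num), one_mul]
    _ ≤ ENNReal.ofReal r * volume S := by gcongr
    _ = ∫⁻ _ in S, ENNReal.ofReal r ∂volume := (setLIntegral_const _ _).symm
    _ ≤ ∫⁻ x in S, (‖x‖₊ : ENNReal) ∂volume := by
        apply setLIntegral_mono_ae measurable_nnnorm.coe_nnreal_ennreal.aemeasurable
        filter_upwards with x hx using hnorm x hx
    _ ≤ ∫⁻ x in A, (‖x‖₊ : ENNReal) ∂volume :=
        lintegral_mono_set Set.diff_subset
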